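/- Let z, w be points of the upper half-plane ℍ and let v₀ ∈ ℂ. Then the limit, as the real parameter h tends to 0, of ρ(Re(z + h v₀) + Im(z + h v₀) · w, Re(z) + Im(z) · w) / |h| exists and equals |v₀ + Im(v₀) · (w − i)| / (Im(z) · Im(w)). -/

import Mathlib

open MeasureTheory

/-- The hyperbolic distance `ρ(z,w) = 2 arsinh(|z − w| / (2 √(Im z Im w)))`. -/
noncomputable def hypd (z w : ℂ) : ℝ :=
  2 * Real.arsinh (‖z - w‖ / (2 * Real.sqrt (z.im * w.im)))

private lemma arsinh_div_tendsto :
    Filter.Tendsto (fun x : ℝ => Real.arsinh x / x) (nhdsWithin 0 {0}ᶜ) (nhds 1) := by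
  have h := Real.hasDerivAt_arsinh 0
  rw [hasDerivAt_iff_tendsto_slope] at h
  have h1 : (Real.sqrt (1 + 0 ^ 2))⁻¹ = 1 := by norm_num
  rw [h1] at h
  refine Filter.Tendsto.congr' ?_ h
  filter_upwards [self_mem_nhdsWithin] with x hx
  simp [slope_def_field, Real.arsinh_zero]

/-- For `z, w ∈ ℍ` and `v₀ ∈ ℂ`, as the real parameter `h` tends to `0` (through nonzero
values), `ρ(Re(z + h v₀) + Im(z + h v₀) w, Re z + Im z · w) / |h|` tends to
`|v₀ + Im(v₀)(w − i)| / (Im z · Im w)`. -/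
theorem stmt9 (z w : ℂ) (hz : 0 < z.im) (hw : 0 < w.im) (v₀ : ℂ) :
    Filter.Tendsto
      (fun h : ℝ =>
        hypd (((z + (h : ℂ) * v₀).re : ℂ) + ((z + (h : ℂ) * v₀).im : ℂ) * w)
            ((z.re : ℂ) + (z.im : ℂ) * w) / |h|)
      (nhdsWithin (0 : ℝ) {0}ᶜ)
      (nhds (‖v₀ + (v₀.im : ℂ) * (w - Complex.I)‖ / (z.im * w.im))) := by
  set C := ‖v₀ + (v₀.im : ℂ) * (w - Complex.I)‖ with hCdef
  set Z := z.im * w.im with hZdef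
  have hZ0 : 0 < Z := mul_pos hz hw
  have key : ∀ h : ℝ,
      hypd (((z + (h : ℂ) * v₀).re : ℂ) + ((z + (h : ℂ) * v₀).im : ℂ) * w)
          ((z.re : ℂ) + (z.im : ℂ) * w)
        = 2 * Real.arsinh (|h| * C /
            (2 * Real.sqrt ((z.im + h * v₀.im) * w.im * Z))) := by
    intro h
    have h1 : (((z + (h : ℂ) * v₀).re : ℂ) + ((z + (h : ℂ) * v₀).im : ℂ) * w)
        - ((z.re : ℂ) + (z.im : ℂ) * w)
        = (h : ℂ) * (v₀ + (v₀.im : ℂ) * (w - Complex.I)) := by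
      apply Complex.ext <;>
        simp [Complex.add_re, Complex.add_im, Complex.mul_re, Complex.mul_im,
          Complex.sub_re, Complex.sub_im] <;> ring
    have h2 : ((((z + (h : ℂ) * v₀).re : ℂ)) + ((z + (h : ℂ) * v₀).im : ℂ) * w).im
        = (z.im + h * v₀.im) * w.im := by
      simp [Complex.add_im, Complex.mul_im, Complex.add_re, Complex.mul_re]
    have h3 : (((z.re : ℂ)) + (z.im : ℂ) * w).im = z.im * w.im := by simp
    rw [hypd, h1, h2, h3, norm_mul, Complex.norm_real, Real.norm_eq_abs, ← hZdef]
  have keyfun : (fun h : ℝ =>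
        hypd (((z + (h : ℂ) * v₀).re : ℂ) + ((z + (h : ℂ) * v₀).im : ℂ) * w)
            ((z.re : ℂ) + (z.im : ℂ) * w) / |h|)
      = fun h : ℝ => 2 * Real.arsinh (|h| * C /
            (2 * Real.sqrt ((z.im + h * v₀.im) * w.im * Z))) / |h| := by
    funext h; rw [key h]
  rw [keyfun]
  by_cases hC0 : C = 0
  · rw [hC0]
    have : (fun h : ℝ => 2 * Real.arsinh (|h| * 0 /
            (2 * Real.sqrt ((z.im + h * v₀.im) * w.im * Z))) / |h|) = fun _ : ℝ => (0:ℝ) := by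
      funext h; simp
    rw [this]
    simpa using tendsto_const_nhds
  have hCpos : 0 < C := (norm_nonneg _).lt_of_ne (Ne.symm hC0)
  -- positivity of z.im + h * v₀.im eventually
  have hcont : Filter.Tendsto (fun h : ℝ => z.im + h * v₀.im) (nhds 0) (nhds z.im) := by
    have hc : Continuous (fun h : ℝ => z.im + h * v₀.im) := by fun_prop
    simpa using hc.tendsto 0
  have hev : ∀ᶠ h in nhdsWithin (0:ℝ) {0}ᶜ, 0 < z.im + h * v₀.im :=
    ((hcont.eventually (eventually_gt_nhds hz)).filter_mono nhdsWithin_le_nhds)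
  -- denominator limit
  have hden : Filter.Tendsto (fun h : ℝ => Real.sqrt ((z.im + h * v₀.im) * w.im * Z))
      (nhdsWithin (0:ℝ) {0}ᶜ) (nhds Z) := by
    have hin : Filter.Tendsto (fun h : ℝ => (z.im + h * v₀.im) * w.im * Z)
        (nhdsWithin (0:ℝ) {0}ᶜ) (nhds (Z * Z)) := by
      apply Filter.Tendsto.mono_left _ nhdsWithin_le_nhds
      have hc : Continuous (fun h : ℝ => (z.im + h * v₀.im) * w.im * Z) := by fun_prop
      simpa [hZdef] using hc.tendsto 0
    have := (Real.continuous_sqrt.tendsto (Z * Z)).comp hin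
    simpa [Real.sqrt_mul_self hZ0.le, Function.comp_def] using this
  have ht : Filter.Tendsto (fun h : ℝ => C / (2 * Real.sqrt ((z.im + h * v₀.im) * w.im * Z)))
      (nhdsWithin (0:ℝ) {0}ᶜ) (nhds (C / (2 * Z))) :=
    Filter.Tendsto.div tendsto_const_nhds (tendsto_const_nhds.mul hden)
      (by positivity)
  -- u tends to 0 within punctured
  set u := fun h : ℝ => |h| * C / (2 * Real.sqrt ((z.im + h * v₀.im) * w.im * Z)) with hudef
  have habs : Filter.Tendsto (fun h : ℝ => |h|) (nhdsWithin (0:ℝ) {0}ᶜ) (nhds 0) := by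
    apply Filter.Tendsto.mono_left _ nhdsWithin_le_nhds
    simpa using continuous_abs.tendsto (0:ℝ)
  have hu0 : Filter.Tendsto u (nhdsWithin (0:ℝ) {0}ᶜ) (nhds 0) := by
    have := habs.mul ht
    simp only [hudef, mul_div_assoc]
    simpa using this
  have huev : ∀ᶠ h in nhdsWithin (0:ℝ) {0}ᶜ, u h ∈ ({0}ᶜ : Set ℝ) := by
    filter_upwards [hev, self_mem_nhdsWithin] with h hpos hne
    have hh : h ≠ 0 := hne
    have hsq : 0 < Real.sqrt ((z.im + h * v₀.im) * w.im * Z) :=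
      Real.sqrt_pos.mpr (by positivity)
    have : 0 < u h := by
      rw [hudef]
      have : 0 < |h| := abs_pos.mpr hh
      positivity
    exact ne_of_gt this
  have hu : Filter.Tendsto u (nhdsWithin (0:ℝ) {0}ᶜ) (nhdsWithin (0:ℝ) {0}ᶜ) :=
    tendsto_nhdsWithin_iff.mpr ⟨hu0, huev⟩
  have hphi : Filter.Tendsto (fun h : ℝ => Real.arsinh (u h) / u h)
      (nhdsWithin (0:ℝ) {0}ᶜ) (nhds 1) := arsinh_div_tendsto.comp hu
  have hprod : Filter.Tendsto
      (fun h : ℝ => 2 * (Real.arsinh (u h) / u h) *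
        (C / (2 * Real.sqrt ((z.im + h * v₀.im) * w.im * Z))))
      (nhdsWithin (0:ℝ) {0}ᶜ) (nhds (2 * 1 * (C / (2 * Z)))) :=
    (tendsto_const_nhds.mul hphi).mul ht
  have hval : 2 * 1 * (C / (2 * Z)) = C / Z := by
    field_simp
  rw [hval] at hprod
  refine hprod.congr' ?_
  filter_upwards [hev, self_mem_nhdsWithin] with h hpos hne
  have hh : (|h| : ℝ) ≠ 0 := abs_ne_zero.mpr hne
  have hsq : 0 < Real.sqrt ((z.im + h * v₀.im) * w.im * Z) :=
    Real.sqrt_pos.mpr (by positivity)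
  have hun : u h ≠ 0 := by
    have : 0 < u h := by
      rw [hudef]
      have : 0 < |h| := abs_pos.mpr hne
      positivity
    exact ne_of_gt this
  show 2 * (Real.arsinh (u h) / u h) *
        (C / (2 * Real.sqrt ((z.im + h * v₀.im) * w.im * Z)))
      = 2 * Real.arsinh (u h) / |h|
  rw [hudef]
  field_simp
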